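/- Let L be a function field in one variable over ℂ, let α_1,…,α_r be nonzero elements of L which are multiplicatively independent modulo ℂ (no nontrivial integer power product of them lies in ℂ), and let α_0 ∈ L*. If there are nonzero integers k_1,…,k_r such that α_1^{k_1} α_2^{k_2} ⋯ α_r^{k_r} = α_0, then for every i ∈ {1,…,r}, |k_i| ≤ ((r+1)!/ℋ(α_i)) · ℋ(α_1)⋯ℋ(α_r) · ℋ(α_0). -/

import Mathlib

open scoped BigOperators Classical

/-- The height `ℋ(f) = -∑_{μ ∈ 𝓜_L} min{0, μ(f)}` of an element of a function field,
relative to a family `val` of discrete valuations (the places of `L`). -/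
noncomputable def ffHeight {L V : Type*} [Field L] (val : V → L → ℤ) (f : L) : ℕ :=
  (-(∑ᶠ v, min 0 (val v f))).toNat

theorem aux_span_top {K : Type*} [Field K] {V : Type*} {r : ℕ} {c : Fin r → V → K}
    (hc : LinearIndependent K c) :
    Submodule.span K (Set.range fun v : V => fun j => c j v) = ⊤ := by
  by_contra h
  obtain ⟨f, hf0, hf⟩ : ∃ f : (Fin r → K) →ₗ[K] K, f ≠ 0 ∧
      ∀ x ∈ Submodule.span K (Set.range fun v : V => fun j => c j v), f x = 0 := by
    obtain ⟨f, hf0, hf⟩ := Submodule.exists_dual_map_eq_bot_of_lt_top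
      (lt_top_iff_ne_top.mpr h) inferInstance
    refine ⟨f, hf0, fun x hx => ?_⟩
    have : f x ∈ Submodule.map f (Submodule.span K _) := ⟨x, hx, rfl⟩
    rw [hf] at this
    exact (Submodule.mem_bot K).mp this
  have hg : ∀ v : V, ∑ j, c j v * f (fun j' => if j = j' then 1 else 0) = 0 := by
    intro v
    have := hf _ (Submodule.subset_span ⟨v, rfl⟩)
    rw [LinearMap.pi_apply_eq_sum_univ f (fun j => c j v)] at this
    simpa [smul_eq_mul] using this
  have hz := linearIndependent_iff'.mp hc Finset.univ
      (fun j => f (fun j' => if j = j' then 1 else 0)) ?_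
  · apply hf0
    apply LinearMap.ext
    intro x
    rw [LinearMap.pi_apply_eq_sum_univ f x]
    simp [hz _ (Finset.mem_univ _)]
  · funext v
    simpa [Finset.sum_apply, mul_comm] using hg v

theorem aux_exists_det {K : Type*} [Field K] {V : Type*} {r : ℕ} {c : Fin r → V → K}
    (hc : LinearIndependent K c) :
    ∃ s : Fin r → V, (Matrix.of fun i j => c j (s i)).det ≠ 0 := by
  classical
  have hspan := aux_span_top hc
  obtain ⟨t, hts, htsp, hti⟩ := exists_linearIndependent K
    (Set.range fun v : V => fun j => c j v)
  rw [hspan] at htsp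
  -- t is a basis of `Fin r → K`
  have : Finite ↑t := hti.finite
  have hfin : t.Finite := Set.toFinite t
  have : Fintype t := hfin.fintype
  have hcard : Fintype.card t = r := by
    have b : Module.Basis t K (Fin r → K) := Module.Basis.mk hti (by rw [Subtype.range_coe, htsp])
    simpa using (Module.finrank_eq_card_basis b).symm
  let e : Fin r ≃ t := (Fintype.equivFinOfCardEq hcard).symm
  choose g hg using fun x : t => hts x.2
  refine ⟨fun i => g (e i), ?_⟩
  have hrows : LinearIndependent K (fun i : Fin r => (Matrix.of fun i j => c j (g (e i))) i) := by
    have : (fun i : Fin r => (Matrix.of fun i j => c j (g (e i))) i)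
        = (fun x : t => (x : Fin r → K)) ∘ e := by
      funext i
      ext j
      have := hg (e i)
      simpa using congrFun this j
    rw [this]
    exact hti.comp e e.injective
  have := Matrix.linearIndependent_rows_iff_isUnit.mp hrows
  exact (Matrix.isUnit_iff_isUnit_det _).mp this |>.ne_zero

theorem aux_det_bound {r : ℕ} (M : Matrix (Fin r) (Fin r) ℚ) (B : Fin r → ℚ)
    (h : ∀ i j, |M i j| ≤ B j) : |M.det| ≤ (r.factorial : ℚ) * ∏ j, B j := by
  rw [Matrix.det_apply]
  calc |∑ σ : Equiv.Perm (Fin r), Equiv.Perm.sign σ • ∏ i, M (σ i) i|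
      ≤ ∑ σ : Equiv.Perm (Fin r), |Equiv.Perm.sign σ • ∏ i, M (σ i) i| :=
        Finset.abs_sum_le_sum_abs _ _
    _ ≤ ∑ _σ : Equiv.Perm (Fin r), ∏ j, B j := by
        refine Finset.sum_le_sum fun σ _ => ?_
        have hs : |Equiv.Perm.sign σ • ∏ i, M (σ i) i| = |∏ i, M (σ i) i| := by
          rcases Int.units_eq_one_or (Equiv.Perm.sign σ) with h1 | h1 <;>
            simp [h1, Units.smul_def]
        rw [hs, Finset.abs_prod]
        exact Finset.prod_le_prod (fun i _ => abs_nonneg _) (fun i _ => h (σ i) i)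
    _ = (r.factorial : ℚ) * ∏ j, B j := by
        rw [Finset.sum_const, nsmul_eq_mul, Finset.card_univ, Fintype.card_perm]
        simp

theorem aux_height {V : Type*} (f : V → ℤ) (hsupp : (Function.support f).Finite)
    (hsum : ∑ᶠ v, f v = 0) :
    (0 ≤ -∑ᶠ v, min 0 (f v)) ∧ (∀ v, |f v| ≤ -∑ᶠ v, min 0 (f v)) ∧
      ((-∑ᶠ v, min 0 (f v)) = 0 → ∀ v, f v = 0) := by
  set m : V → ℤ := fun v => min 0 (f v) with hm
  set M : V → ℤ := fun v => max 0 (f v) with hM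
  have hms : Function.support m ⊆ Function.support f := by
    intro v hv
    simp only [Function.mem_support, hm] at hv ⊢
    intro h0; apply hv; simp [h0]
  have hMs : Function.support M ⊆ Function.support f := by
    intro v hv
    simp only [Function.mem_support, hM] at hv ⊢
    intro h0; apply hv; simp [h0]
  have hmf : (Function.support m).Finite := hsupp.subset hms
  have hMf : (Function.support M).Finite := hsupp.subset hMs
  have hsplit : ∑ᶠ v, m v + ∑ᶠ v, M v = 0 := by
    rw [← finsum_add_distrib hmf hMf]
    rw [← hsum]
    congr 1
    funext v
    simp only [hm, hM]
    rw [min_add_max]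
    simp
  have hMnonneg : ∀ v, 0 ≤ M v := fun v => le_max_left 0 (f v)
  have hmnonpos : ∀ v, m v ≤ 0 := fun v => min_le_left 0 (f v)
  have heq : -∑ᶠ v, m v = ∑ᶠ v, M v := by linarith
  have hMsum_nonneg : 0 ≤ ∑ᶠ v, M v := finsum_nonneg hMnonneg
  have hnegm : ∑ᶠ v, -m v = -∑ᶠ v, m v := finsum_neg_distrib m
  refine ⟨by rw [heq]; exact hMsum_nonneg, fun v => ?_, fun h0 v => ?_⟩
  · rw [heq]
    have h1 : f v ≤ ∑ᶠ v, M v :=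
      le_trans (le_max_right 0 (f v)) (single_le_finsum v hMf hMnonneg)
    have h2 : -f v ≤ -∑ᶠ v, m v := by
      have hsup : (Function.support fun v => -m v).Finite := by
        have : (Function.support fun v => -m v) = Function.support m := by
          ext w; simp
        rw [this]; exact hmf
      have h4 : -m v ≤ ∑ᶠ v, -m v :=
        single_le_finsum (f := fun v => -m v) v hsup (fun j => by simpa using hmnonpos j)
      have h3 : -f v ≤ -m v := by simp [hm, neg_le]
      linarith [hnegm ▸ h4]
    rw [abs_le]
    constructor <;> linarith
  · have hMz : ∑ᶠ v, M v = 0 := by linarith [heq ▸ h0]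
    have hMv : M v = 0 :=
      le_antisymm (hMz ▸ single_le_finsum v hMf hMnonneg) (hMnonneg v)
    have hmv : m v = 0 := by
      have hsup : (Function.support fun v => -m v).Finite := by
        have : (Function.support fun v => -m v) = Function.support m := by
          ext w; simp
        rw [this]; exact hmf
      have h4 : -m v ≤ ∑ᶠ v, -m v :=
        single_le_finsum (f := fun v => -m v) v hsup (fun j => by simpa using hmnonpos j)
      rw [hnegm] at h4
      have h5 := h4.trans (le_of_eq h0)
      linarith [hmnonpos v]
    have : f v ≤ 0 := by simpa [hM, max_eq_left_iff] using hMv.le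
    have : 0 ≤ f v := by
      have := hmv.ge
      simp only [hm, le_min_iff] at this
      exact this.2
    omega

/-- **Lemma (multiplicative dependence bound, function field case).**
Let `L` be a function field in one variable over `ℂ` (a finite extension of `ℂ(z)`),
with set of places `V` and valuations `val` satisfying the usual axioms
(additivity, finiteness of support, sum formula, and: an element has all valuations zero
iff it is a constant).  Let `α_1, …, α_r ∈ L*` be multiplicatively independent modulo `ℂ`
and `α_0 ∈ L*`.  If there are nonzero integers `k_1, …, k_r` with
`α_1^{k_1} ⋯ α_r^{k_r} = α_0`, then
`|k_i| ≤ ((r+1)!/ℋ(α_i)) · ℋ(α_1)⋯ℋ(α_r) · ℋ(α_0)` for every `i`. -/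
theorem stmt_10
    (L : Type*) [Field L] [Algebra ℂ L] [Algebra (RatFunc ℂ) L]
    [IsScalarTower ℂ (RatFunc ℂ) L] [FiniteDimensional (RatFunc ℂ) L]
    (V : Type*) (val : V → L → ℤ)
    (hval_mul : ∀ v (x y : L), x ≠ 0 → y ≠ 0 → val v (x * y) = val v x + val v y)
    (hval_supp : ∀ x : L, x ≠ 0 → (Function.support fun v => val v x).Finite)
    (hval_sum : ∀ x : L, x ≠ 0 → ∑ᶠ v, val v x = 0)
    (hval_const : ∀ x : L, x ≠ 0 → ((∀ v, val v x = 0) ↔ ∃ c : ℂ, algebraMap ℂ L c = x))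
    (r : ℕ) (α : Fin r → L) (hα0 : ∀ i, α i ≠ 0)
    -- `α_1, …, α_r` are multiplicatively independent modulo `ℂ`
    (hindep : ¬ ∃ n : Fin r → ℤ, n ≠ 0 ∧ ∃ c : ℂ, algebraMap ℂ L c = ∏ i, α i ^ n i)
    (α₀ : L) (hα₀ : α₀ ≠ 0)
    (k : Fin r → ℤ) (hk : ∀ i, k i ≠ 0)
    (hrel : (∏ i, α i ^ k i) = α₀) :
    ∀ i, (|k i| : ℝ) ≤
      ((r + 1).factorial : ℝ) / (ffHeight val (α i) : ℝ)
        * (∏ j, (ffHeight val (α j) : ℝ)) * (ffHeight val α₀ : ℝ) := by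
  intro i
  -- basic valuation arithmetic
  have hval1 : ∀ v, val v (1 : L) = 0 := by
    intro v
    have := hval_mul v 1 1 one_ne_zero one_ne_zero
    simpa using this
  have hvinv : ∀ v (x : L), x ≠ 0 → val v x⁻¹ = -val v x := by
    intro v x hx
    have := hval_mul v x x⁻¹ hx (inv_ne_zero hx)
    rw [mul_inv_cancel₀ hx, hval1] at this
    omega
  have hvpow : ∀ v (x : L), x ≠ 0 → ∀ n : ℕ, val v (x ^ n) = n * val v x := by
    intro v x hx n
    induction n with
    | zero => simpa using hval1 v
    | succ m ih =>
        rw [pow_succ, hval_mul v _ _ (pow_ne_zero m hx) hx, ih]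
        push_cast; ring
  have hvzpow : ∀ v (x : L), x ≠ 0 → ∀ n : ℤ, val v (x ^ n) = n * val v x := by
    intro v x hx n
    cases n with
    | ofNat m => rw [Int.ofNat_eq_natCast, zpow_natCast, hvpow v x hx m]
    | negSucc m =>
        rw [zpow_negSucc, hvinv v _ (pow_ne_zero _ hx), hvpow v x hx (m + 1), Int.negSucc_eq]
        push_cast; ring
  have hprodne : ∀ (n : Fin r → ℤ), (∏ j, α j ^ n j) ≠ 0 := by
    intro n
    rw [Finset.prod_ne_zero_iff]
    exact fun j _ => zpow_ne_zero _ (hα0 j)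
  have hvprod : ∀ v (n : Fin r → ℤ), val v (∏ j, α j ^ n j) = ∑ j, n j * val v (α j) := by
    intro v n
    induction (Finset.univ : Finset (Fin r)) using Finset.cons_induction with
    | empty => simpa using hval1 v
    | cons a t ha ih =>
        rw [Finset.prod_cons, Finset.sum_cons,
          hval_mul v _ _ (zpow_ne_zero _ (hα0 a))
            (Finset.prod_ne_zero_iff.mpr fun j _ => zpow_ne_zero _ (hα0 j)),
          hvzpow v _ (hα0 a), ih]
  have hkey : ∀ v, val v α₀ = ∑ j, k j * val v (α j) := by
    intro v
    rw [← hrel, hvprod v k]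
  -- height facts
  have hH : ∀ x : L, x ≠ 0 →
      (∀ v, |val v x| ≤ (ffHeight val x : ℤ)) ∧ (ffHeight val x = 0 → ∀ v, val v x = 0) := by
    intro x hx
    obtain ⟨h1, h2, h3⟩ := aux_height (fun v => val v x) (hval_supp x hx) (hval_sum x hx)
    have hcast : (ffHeight val x : ℤ) = -∑ᶠ v, min 0 (val v x) := by
      rw [ffHeight, Int.toNat_of_nonneg h1]
    refine ⟨fun v => by rw [hcast]; exact h2 v, fun h0 v => ?_⟩
    apply h3 _ v
    rw [← hcast, h0]
    rfl
  have hHα : ∀ j, ffHeight val (α j) ≠ 0 := by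
    intro j h0
    refine hindep ⟨Pi.single j 1, ?_, ?_⟩
    · intro h
      have := congrFun h j
      simp at this
    · have hc := (hval_const (α j) (hα0 j)).mp ((hH (α j) (hα0 j)).2 h0)
      obtain ⟨c, hc⟩ := hc
      refine ⟨c, ?_⟩
      rw [hc]
      rw [Finset.prod_eq_single j (fun b _ hb => by simp [Pi.single_apply, hb]) (by simp)]
      simp
  have hHα₀ : ffHeight val α₀ ≠ 0 := by
    intro h0
    refine hindep ⟨k, ?_, ?_⟩
    · intro h
      exact hk i (by rw [h]; rfl)
    · obtain ⟨c, hc⟩ := (hval_const α₀ hα₀).mp ((hH α₀ hα₀).2 h0)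
      exact ⟨c, by rw [hc, hrel]⟩
  -- linear independence over ℚ of the valuation vectors
  set c : Fin r → V → ℚ := fun j v => (val v (α j) : ℚ) with hc_def
  have hindepZ : LinearIndependent ℤ c := by
    rw [Fintype.linearIndependent_iff]
    intro g hg j
    by_contra hgj
    have hvg : ∀ v, ∑ j', g j' * val v (α j') = 0 := by
      intro v
      have := congrFun hg v
      simp only [Finset.sum_apply, Pi.smul_apply, hc_def, zsmul_eq_mul, Pi.mul_apply,
        Pi.zero_apply, Pi.intCast_apply] at this
      exact_mod_cast this
    have hvx : ∀ v, val v (∏ j', α j' ^ g j') = 0 := by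
      intro v
      rw [hvprod v g, hvg v]
    obtain ⟨cc, hcc⟩ := (hval_const _ (hprodne g)).mp hvx
    exact hindep ⟨g, fun h => hgj (by rw [h]; rfl), cc, hcc⟩
  have hindepQ : LinearIndependent ℚ c :=
    (LinearIndependent.iff_fractionRing ℤ ℚ).mp hindepZ
  obtain ⟨s, hdet⟩ := aux_exists_det hindepQ
  set A : Matrix (Fin r) (Fin r) ℚ := Matrix.of fun i' j => c j (s i') with hA_def
  set Az : Matrix (Fin r) (Fin r) ℤ := Matrix.of fun i' j => val (s i') (α j) with hAz_def
  have hmapdet : A.det = (Az.det : ℚ) := by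
    have hmap : A = (Int.castRingHom ℚ).mapMatrix Az := by
      ext i' j
      simp [hA_def, hc_def, hAz_def, RingHom.mapMatrix_apply, Matrix.map_apply]
    rw [hmap, ← RingHom.map_det]
    rfl
  have hdetA1 : (1 : ℚ) ≤ |A.det| := by
    rw [hmapdet, ← Int.cast_abs]
    have : Az.det ≠ 0 := by
      intro h
      rw [hmapdet, h] at hdet
      exact hdet (by norm_num)
    exact_mod_cast Int.one_le_abs this
  -- Cramer's rule
  set kq : Fin r → ℚ := fun j => (k j : ℚ) with hkq_def
  set b : Fin r → ℚ := fun i' => (val (s i') α₀ : ℚ) with hb_def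
  have hmv : A.mulVec kq = b := by
    funext i'
    simp only [Matrix.mulVec, dotProduct, hA_def, hkq_def, hb_def, Matrix.of_apply, hc_def]
    rw [hkey (s i')]
    push_cast
    apply Finset.sum_congr rfl
    intro j _
    ring
  have hcram : A.det * kq i = (A.updateCol i b).det := by
    have h1 : Matrix.cramer A b = A.det • kq := by
      rw [← hmv, Matrix.cramer_eq_adjugate_mulVec, Matrix.mulVec_mulVec, Matrix.adjugate_mul,
        Matrix.smul_mulVec, Matrix.one_mulVec]
    have h2 := congrFun h1 i
    rw [Matrix.cramer_apply] at h2
    simpa [smul_eq_mul] using h2.symm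
  -- entry bounds for the Cramer matrix
  set Bd : Fin r → ℚ := fun j => if j = i then (ffHeight val α₀ : ℚ) else (ffHeight val (α j) : ℚ)
    with hBd_def
  have hent : ∀ i' j, |(A.updateCol i b) i' j| ≤ Bd j := by
    intro i' j
    simp only [hBd_def, Matrix.updateCol_apply, hb_def, hA_def, Matrix.of_apply, hc_def]
    by_cases hji : j = i
    · rw [if_pos hji, if_pos hji, ← Int.cast_abs]
      exact_mod_cast (hH α₀ hα₀).1 (s i')
    · rw [if_neg hji, if_neg hji, ← Int.cast_abs]
      exact_mod_cast (hH (α j) (hα0 j)).1 (s i')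
  have hbound := aux_det_bound (A.updateCol i b) Bd hent
  -- conclude over ℚ
  have hQ : |kq i| ≤ (r.factorial : ℚ) * ∏ j, Bd j := by
    have h1 : |A.det * kq i| ≤ (r.factorial : ℚ) * ∏ j, Bd j := by
      rw [hcram]; exact hbound
    rw [abs_mul] at h1
    nlinarith [abs_nonneg (kq i), abs_nonneg (A.det * kq i)]
  have hprodBd : ∏ j, Bd j
      = (ffHeight val α₀ : ℚ) * ∏ j ∈ Finset.univ.erase i, (ffHeight val (α j) : ℚ) := by
    rw [← Finset.mul_prod_erase Finset.univ Bd (Finset.mem_univ i)]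
    rw [hBd_def]
    simp only [if_pos rfl]
    congr 1
    apply Finset.prod_congr rfl
    intro j hj
    rw [if_neg (Finset.ne_of_mem_erase hj)]
  -- pass to ℝ
  have hQR : (|k i| : ℝ) ≤ (r.factorial : ℝ) * ((ffHeight val α₀ : ℝ)
      * ∏ j ∈ Finset.univ.erase i, (ffHeight val (α j) : ℝ)) := by
    rw [hprodBd] at hQ
    have := hQ
    rw [hkq_def] at this
    push_cast at this ⊢
    exact_mod_cast this
  refine hQR.trans ?_
  have hHipos : (0 : ℝ) < (ffHeight val (α i) : ℝ) := by
    exact_mod_cast Nat.pos_of_ne_zero (hHα i)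
  have hsplit : (∏ j, (ffHeight val (α j) : ℝ))
      = (ffHeight val (α i) : ℝ) * ∏ j ∈ Finset.univ.erase i, (ffHeight val (α j) : ℝ) :=
    (Finset.mul_prod_erase Finset.univ _ (Finset.mem_univ i)).symm
  rw [hsplit]
  have hne : (ffHeight val (α i) : ℝ) ≠ 0 := ne_of_gt hHipos
  have heq : ((r + 1).factorial : ℝ) / (ffHeight val (α i) : ℝ)
      * ((ffHeight val (α i) : ℝ) * ∏ j ∈ Finset.univ.erase i, (ffHeight val (α j) : ℝ))
      * (ffHeight val α₀ : ℝ)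
      = ((r + 1).factorial : ℝ) * (∏ j ∈ Finset.univ.erase i, (ffHeight val (α j) : ℝ))
        * (ffHeight val α₀ : ℝ) := by
    field_simp
  rw [heq]
  have hfact : (r.factorial : ℝ) ≤ ((r + 1).factorial : ℝ) := by
    exact_mod_cast Nat.factorial_le (Nat.le_succ r)
  have hP : (0:ℝ) ≤ ∏ j ∈ Finset.univ.erase i, (ffHeight val (α j) : ℝ) :=
    Finset.prod_nonneg fun j _ => by positivity
  have hH0 : (0:ℝ) ≤ (ffHeight val α₀ : ℝ) := by positivity
  nlinarith [mul_le_mul_of_nonneg_right hfact (mul_nonneg hP hH0)]
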